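/- There exist constants c₁, c₂ > 0 such that for all large N, c₁ N/log N ≤ #{n ≤ N : n is prime} and ∫₀¹ |∑_{p ≤ N, p prime} r_p(t)| dt ≤ c₂ (N/log N)^{1/2}. Consequently, if σ > 0 and c > 0 satisfy #{primes ≤ N} ≤ c N^σ ∫₀¹ |∑_{p ≤ N} r_p(t)| dt for all N, then σ ≥ 1/2. -/

import Mathlib

open MeasureTheory Filter Finset

/-- The `n`-th Rademacher function on `[0,1]`. -/
noncomputable def rad (n : ℕ) (t : ℝ) : ℝ :=
  if Int.fract ((2 ^ n : ℝ) * t) < 1 / 2 then 1 else -1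



lemma fract_lt_half_iff (x : ℝ) : Int.fract x < 1 / 2 ↔ Even ⌊2 * x⌋ := by
  have h0 := Int.fract_nonneg x
  have h1 := Int.fract_lt_one x
  have hfl : ⌊2 * x⌋ = ⌊2 * Int.fract x⌋ + 2 * ⌊x⌋ := by
    conv_lhs => rw [show 2 * x = 2 * Int.fract x + ((2 * ⌊x⌋ : ℤ) : ℝ) by
      push_cast [Int.fract]; ring]
    exact Int.floor_add_intCast _ _
  by_cases h : Int.fract x < 1 / 2
  · have h2 : ⌊2 * Int.fract x⌋ = 0 := by
      rw [Int.floor_eq_zero_iff]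
      exact ⟨by linarith, by linarith⟩
    simp only [h, true_iff, hfl, h2, Int.even_iff]
    omega
  · have h2 : ⌊2 * Int.fract x⌋ = 1 := by
      rw [Int.floor_eq_iff]
      constructor <;> push_cast <;> linarith
    simp only [h, false_iff, hfl, h2, Int.even_iff]
    omega

lemma rad_eq_floor (n : ℕ) (t : ℝ) :
    rad n t = if Even ⌊(2:ℝ)^(n+1) * t⌋ then 1 else -1 := by
  simp only [rad, fract_lt_half_iff, pow_succ', mul_assoc]

lemma floor_pow_mul {m j k : ℕ} (hmj : m + 1 ≤ j) {t : ℝ}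
    (h1 : (k:ℝ)/2^j ≤ t) (h2 : t < ((k:ℝ)+1)/2^j) :
    ⌊(2:ℝ)^(m+1) * t⌋ = (k / 2^(j-m-1) : ℕ) := by
  set d := j - m - 1 with hdd
  have hd : m + 1 + d = j := by omega
  have h2d : (0:ℝ) < 2^d := by positivity
  have h2m : (0:ℝ) < 2^(m+1) := by positivity
  have hsplit : (2:ℝ)^j = 2^(m+1) * 2^d := by rw [← pow_add, hd]
  have key1 : ((k / 2^d : ℕ):ℝ) * 2^d ≤ k := by
    exact_mod_cast Nat.div_mul_le_self k (2^d)
  have key2 : (k:ℝ) + 1 ≤ 2^d * (((k / 2^d : ℕ):ℝ) + 1) := by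
    exact_mod_cast Nat.succ_le_of_lt (Nat.lt_mul_div_succ k (pow_pos two_pos d))
  rw [div_le_iff₀ (by positivity)] at h1
  rw [lt_div_iff₀ (by positivity)] at h2
  rw [hsplit] at h1 h2
  have goal1 : ((k / 2^d : ℕ):ℝ) ≤ 2^(m+1)*t := by nlinarith
  have goal2 : 2^(m+1)*t < ((k / 2^d : ℕ):ℝ) + 1 := by nlinarith
  rw [Int.floor_eq_iff]
  exact ⟨by exact_mod_cast goal1, by exact_mod_cast goal2⟩
lemma measurable_rad (n : ℕ) : Measurable (rad n) := by
  apply Measurable.ite _ measurable_const measurable_const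
  exact measurableSet_lt (measurable_fract.comp (measurable_id.const_mul _)) measurable_const

lemma abs_rad (n : ℕ) (t : ℝ) : |rad n t| = 1 := by
  rw [rad]; split <;> norm_num

lemma rad_sq (n : ℕ) (t : ℝ) : rad n t * rad n t = 1 := by
  rw [rad]; split <;> norm_num

lemma intervalIntegrable_rad_mul (m n : ℕ) (a b : ℝ) :
    IntervalIntegrable (fun t => rad m t * rad n t) volume a b := by
  rw [intervalIntegrable_iff]
  apply Measure.integrableOn_of_bounded (M := 1)
  · exact (measure_Ioc_lt_top).ne
  · exact ((measurable_rad m).mul (measurable_rad n)).aestronglyMeasurable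
  · refine MeasureTheory.ae_of_all _ fun t => ?_
    rw [Real.norm_eq_abs, abs_mul, abs_rad, abs_rad]; norm_num

lemma sum_pair_zero (g : ℕ → ℝ) (h : ∀ i, g (2*i) + g (2*i+1) = 0) (M : ℕ) :
    ∑ k ∈ range (2*M), g k = 0 := by
  induction M with
  | zero => simp
  | succ M ih =>
    rw [show 2*(M+1) = (2*M + 1) + 1 by ring, Finset.sum_range_succ, Finset.sum_range_succ, ih]
    have := h M
    linarith [h M]

lemma integral_rad_mul_of_lt {m n : ℕ} (h : m < n) :
    ∫ t in (0:ℝ)..1, rad m t * rad n t = 0 := by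
  set j := n + 1 with hj
  set a : ℕ → ℝ := fun k => k / 2^j with haa
  have hsum := intervalIntegral.sum_integral_adjacent_intervals
    (a := a) (μ := volume) (n := 2^j)
    (fun k _ => intervalIntegrable_rad_mul m n (a k) (a (k+1)))
  have ha0 : a 0 = 0 := by simp [haa]
  have ha1 : a (2^j) = 1 := by
    simp only [haa]
    rw [div_eq_one_iff_eq (by positivity)]
    push_cast; ring
  rw [ha0, ha1] at hsum
  rw [← hsum]
  -- each summand
  set d := n - m with hdd
  have hd1 : 1 ≤ d := by omega
  set g : ℕ → ℝ := fun k =>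
    ((if Even (k / 2^d) then (1:ℝ) else -1) * (if Even k then (1:ℝ) else -1)) with hgg
  have hterm : ∀ k, (∫ t in a k..a (k+1), rad m t * rad n t) = g k * (1/2^j) := by
    intro k
    have hle : a k ≤ a (k+1) := by
      apply div_le_div_of_nonneg_right ?_ ?_ <;> [skip; positivity]
      · exact_mod_cast Nat.le_succ k
    have hne : (volume : Measure ℝ) {a (k+1)} = 0 := measure_singleton _
    have hconst : ∀ t ∈ Set.Ico (a k) (a (k+1)), rad m t * rad n t = g k := by
      intro t ht
      obtain ⟨ht1, ht2⟩ := ht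
      have h1 : (k:ℝ)/2^j ≤ t := ht1
      have h2 : t < ((k:ℝ)+1)/2^j := by
        have : a (k+1) = ((k:ℝ)+1)/2^j := by
          simp only [haa]
          push_cast
          try ring
        rwa [this] at ht2
      have hm : ⌊(2:ℝ)^(m+1) * t⌋ = (k / 2^(j-m-1) : ℕ) :=
        floor_pow_mul (by omega) h1 h2
      have hn : ⌊(2:ℝ)^(n+1) * t⌋ = (k / 2^(j-n-1) : ℕ) :=
        floor_pow_mul (by omega) h1 h2
      have hjn : j - n - 1 = 0 := by omega
      have hjm : j - m - 1 = d := by omega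
      rw [rad_eq_floor, rad_eq_floor, hm, hn, hjn, hjm]
      simp only [pow_zero, Nat.div_one, hgg]
      norm_cast
    have : (∫ t in a k..a (k+1), rad m t * rad n t) = ∫ t in a k..a (k+1), g k := by
      apply intervalIntegral.integral_congr_ae
      rw [MeasureTheory.ae_iff]
      apply measure_mono_null ?_ hne
      intro t ht
      simp only [Set.mem_setOf_eq, not_forall] at ht
      obtain ⟨htmem, hne'⟩ := ht
      rw [Set.uIoc_of_le hle] at htmem
      simp only [Set.mem_singleton_iff]
      by_contra hcon
      exact hne' (hconst t ⟨le_of_lt htmem.1, lt_of_le_of_ne htmem.2 hcon⟩)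
    rw [this, intervalIntegral.integral_const, smul_eq_mul, mul_comm]
    congr 1
    simp only [haa]
    push_cast
    field_simp
    try ring
  rw [Finset.sum_congr rfl (fun k _ => hterm k), ← Finset.sum_mul]
  have hpair : ∀ i, g (2*i) + g (2*i+1) = 0 := by
    intro i
    have hdiv : (2*i) / 2^d = (2*i+1) / 2^d := by
      have h2d : (2:ℕ)^d = 2 * 2^(d-1) := by
        rw [← pow_succ']
        congr 1
        omega
      rw [h2d, Nat.mul_div_mul_left _ _ (by norm_num), ← Nat.div_div_eq_div_mul]
      congr 1
      omega
    by_cases hE : Even ((2*i+1) / 2^d)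
    · simp only [hgg, hdiv, hE, if_true]
      norm_num [parity_simps]
    · simp only [hgg, hdiv, hE, if_false]
      norm_num [parity_simps]
  rw [show (2:ℕ)^j = 2 * 2^n by rw [← pow_succ']]
  rw [sum_pair_zero g hpair (2^n)]
  simp
lemma intervalIntegrable_of_bdd {f : ℝ → ℝ} (hf : Measurable f) (M : ℝ)
    (hM : ∀ t, |f t| ≤ M) (a b : ℝ) : IntervalIntegrable f volume a b := by
  rw [intervalIntegrable_iff]
  apply Measure.integrableOn_of_bounded (M := M) measure_Ioc_lt_top.ne
    hf.aestronglyMeasurable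
  exact ae_of_all _ fun t => by rw [Real.norm_eq_abs]; exact hM t

lemma integral_rad_mul (p q : ℕ) :
    ∫ t in (0:ℝ)..1, rad p t * rad q t = if p = q then 1 else 0 := by
  rcases lt_trichotomy p q with h|h|h
  · rw [if_neg h.ne]; exact integral_rad_mul_of_lt h
  · subst h
    rw [if_pos rfl]
    rw [intervalIntegral.integral_congr (g := fun _ => (1:ℝ)) (fun t _ => rad_sq p t)]
    simp
  · rw [if_neg h.ne']
    have hc : (∫ t in (0:ℝ)..1, rad p t * rad q t)
        = ∫ t in (0:ℝ)..1, rad q t * rad p t :=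
      intervalIntegral.integral_congr (fun t _ => mul_comm _ _)
    rw [hc]
    exact integral_rad_mul_of_lt h

lemma integral_sq (S : Finset ℕ) :
    ∫ t in (0:ℝ)..1, (∑ p ∈ S, rad p t) * (∑ q ∈ S, rad q t) = S.card := by
  have h1 : (∫ t in (0:ℝ)..1, (∑ p ∈ S, rad p t) * (∑ q ∈ S, rad q t))
      = ∫ t in (0:ℝ)..1, ∑ p ∈ S, ∑ q ∈ S, rad p t * rad q t :=
    intervalIntegral.integral_congr (fun t _ => Finset.sum_mul_sum S S _ _)
  have hintS : ∀ p : ℕ, IntervalIntegrable (fun t => ∑ q ∈ S, rad p t * rad q t) volume 0 1 := by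
    intro p
    apply intervalIntegrable_of_bdd
      (Finset.measurable_sum S (fun q _ => (measurable_rad p).mul (measurable_rad q)))
      (S.card : ℝ)
    intro t
    calc |∑ q ∈ S, rad p t * rad q t| ≤ ∑ q ∈ S, |rad p t * rad q t| :=
          Finset.abs_sum_le_sum_abs _ _
    _ = S.card := by simp [abs_mul, abs_rad]
  have h2 : (∫ t in (0:ℝ)..1, ∑ p ∈ S, ∑ q ∈ S, rad p t * rad q t)
      = ∑ p ∈ S, ∫ t in (0:ℝ)..1, ∑ q ∈ S, rad p t * rad q t :=
    intervalIntegral.integral_finset_sum (fun p _ => hintS p)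
  rw [h1, h2]
  have : ∀ p ∈ S, (∫ t in (0:ℝ)..1, ∑ q ∈ S, rad p t * rad q t)
      = ∑ q ∈ S, ∫ t in (0:ℝ)..1, rad p t * rad q t := fun p _ =>
    intervalIntegral.integral_finset_sum (fun q _ => intervalIntegrable_rad_mul p q 0 1)
  rw [Finset.sum_congr rfl this]
  have : ∀ p ∈ S, (∑ q ∈ S, ∫ t in (0:ℝ)..1, rad p t * rad q t) = 1 := by
    intro p hp
    rw [Finset.sum_congr rfl (fun q _ => integral_rad_mul p q)]
    simp [hp]
  rw [Finset.sum_congr rfl this]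
  simp

lemma L1_le_sqrt_card (S : Finset ℕ) :
    (∫ t in (0:ℝ)..1, |∑ p ∈ S, rad p t|) ≤ Real.sqrt S.card := by
  set f : ℝ → ℝ := fun t => ∑ p ∈ S, rad p t with hf
  have hfm : Measurable f := Finset.measurable_sum S (fun p _ => measurable_rad p)
  have hbd : ∀ t, |f t| ≤ S.card := by
    intro t
    calc |f t| ≤ ∑ p ∈ S, |rad p t| := Finset.abs_sum_le_sum_abs _ _
    _ = S.card := by simp [abs_rad]
  set I := ∫ t in (0:ℝ)..1, |f t| with hI
  have hint_abs : IntervalIntegrable (fun t => |f t|) volume 0 1 :=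
    intervalIntegrable_of_bdd hfm.abs S.card (fun t => by rw [abs_abs]; exact hbd t) 0 1
  have hint_sq : IntervalIntegrable (fun t => f t * f t) volume 0 1 :=
    intervalIntegrable_of_bdd (hfm.mul hfm) ((S.card : ℝ) * S.card)
      (by
        intro t
        rw [Pi.mul_apply, abs_mul]
        exact mul_le_mul (hbd t) (hbd t) (abs_nonneg _) (Nat.cast_nonneg _)) 0 1
  have hI0 : 0 ≤ I := intervalIntegral.integral_nonneg (by norm_num)
    (fun t _ => abs_nonneg _)
  have hexp : (0:ℝ) ≤ ∫ t in (0:ℝ)..1, (f t * f t - 2*I*|f t| + I^2) := by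
    apply intervalIntegral.integral_nonneg (by norm_num)
    intro t _
    have : f t * f t - 2*I*|f t| + I^2 = (|f t| - I)^2 := by
      have := sq_abs (f t)
      nlinarith [sq_abs (f t)]
    rw [this]
    positivity
  have hsplit : (∫ t in (0:ℝ)..1, (f t * f t - 2*I*|f t| + I^2))
      = (S.card : ℝ) - 2*I*I + I^2 := by
    rw [intervalIntegral.integral_add ((hint_sq.sub ((hint_abs.const_mul (2*I)))))
      intervalIntegrable_const]
    rw [intervalIntegral.integral_sub hint_sq (hint_abs.const_mul (2*I))]
    rw [intervalIntegral.integral_const_mul, integral_sq]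
    simp [hI]
  rw [hsplit] at hexp
  have h2 : I^2 ≤ (S.card:ℝ) := by nlinarith
  calc I = Real.sqrt (I^2) := (Real.sqrt_sq hI0).symm
  _ ≤ Real.sqrt S.card := Real.sqrt_le_sqrt h2
def P (N : ℕ) : ℕ := ((Finset.range (N + 1)).filter Nat.Prime).card

def T (n : ℕ) : Finset ℕ :=
  (Finset.range (n + 1)).filter (fun p => p.Prime ∧ Nat.sqrt n < p)


-- number of primes ≤ N
lemma P_mono : Monotone P := fun a b hab =>
  Finset.card_le_card (Finset.filter_subset_filter _
    (Finset.range_subset_range.mpr (by omega)))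

lemma centralBinom_le_pow (n : ℕ) (hn : 1 ≤ n) :
    Nat.centralBinom n ≤ (2*n) ^ P (2*n) := by
  have hne : Nat.centralBinom n ≠ 0 := Nat.centralBinom_ne_zero n
  conv_lhs => rw [← Nat.factorization_prod_pow_eq_self hne]
  rw [Finsupp.prod]
  have hsub : (Nat.centralBinom n).factorization.support
      ⊆ (Finset.range (2*n + 1)).filter Nat.Prime := by
    intro p hp
    rw [Nat.support_factorization] at hp
    have hprime : p.Prime := Nat.prime_of_mem_primeFactors hp
    have hdvd : p ∣ Nat.centralBinom n := Nat.dvd_of_mem_primeFactors hp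
    have hple : p ≤ 2*n := by
      have h1 : p ^ 1 ≤ p ^ (Nat.centralBinom n).factorization p := by
        apply Nat.pow_le_pow_right hprime.pos
        have := (Nat.Prime.factorization_pos_of_dvd hprime hne hdvd)
        omega
      have h2 : p ^ (Nat.centralBinom n).factorization p ≤ 2*n := by
        rw [Nat.centralBinom]
        exact Nat.pow_factorization_choose_le (by omega)
      rw [Nat.centralBinom] at h1
      calc p = p ^ 1 := (pow_one p).symm
      _ ≤ _ := h1
      _ ≤ 2*n := h2
    simp [hprime, Nat.lt_succ_iff.mpr hple]
  calc ∏ p ∈ (Nat.centralBinom n).factorization.support,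
        p ^ (Nat.centralBinom n).factorization p
      ≤ ∏ p ∈ (Nat.centralBinom n).factorization.support, (2*n) := by
        apply Finset.prod_le_prod' 
        intro p _
        rw [Nat.centralBinom]
        exact Nat.pow_factorization_choose_le (by omega)
  _ = (2*n) ^ (Nat.centralBinom n).factorization.support.card := by
        rw [Finset.prod_const]
  _ ≤ (2*n) ^ P (2*n) := by
        apply Nat.pow_le_pow_right (by omega)
        exact Finset.card_le_card hsub

lemma cheb_lower_nat (n : ℕ) (hn : 4 ≤ n) : 4 ^ n < n * (2*n) ^ P (2*n) :=
  lt_of_lt_of_le (Nat.four_pow_lt_mul_centralBinom n hn)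
    (Nat.mul_le_mul_left n (centralBinom_le_pow n (by omega)))

-- primes in (sqrt n, n]
lemma P_le_T (n : ℕ) : P n ≤ (Nat.sqrt n + 1) + (T n).card := by
  have hsub : (Finset.range (n + 1)).filter Nat.Prime
      ⊆ Finset.range (Nat.sqrt n + 1) ∪ T n := by
    intro p hp
    simp only [Finset.mem_filter, Finset.mem_range] at hp
    rcases le_or_gt p (Nat.sqrt n) with h | h
    · exact Finset.mem_union_left _ (Finset.mem_range.mpr (by omega))
    · exact Finset.mem_union_right _ (by simp [T, hp.1, hp.2, h])
  calc P n ≤ (Finset.range (Nat.sqrt n + 1) ∪ T n).card := Finset.card_le_card hsub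
  _ ≤ (Nat.sqrt n + 1) + (T n).card := by
      apply le_trans (Finset.card_union_le _ _)
      simp

lemma T_pow_le (n : ℕ) : (Nat.sqrt n + 1) ^ (T n).card ≤ 4 ^ n := by
  calc (Nat.sqrt n + 1) ^ (T n).card = ∏ _p ∈ T n, (Nat.sqrt n + 1) := by
        rw [Finset.prod_const]
  _ ≤ ∏ p ∈ T n, p := by
        apply Finset.prod_le_prod'
        intro p hp
        simp only [T, Finset.mem_filter] at hp
        omega
  _ ≤ ∏ p ∈ (Finset.range (n+1)).filter Nat.Prime, p := by
        apply Finset.prod_le_prod_of_subset_of_one_le'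
        · intro p hp
          simp only [T, Finset.mem_filter] at hp
          simp [hp.1, hp.2.1]
        · intro p hp _
          simp only [Finset.mem_filter] at hp
          exact hp.2.one_lt.le
  _ = primorial n := rfl
  _ ≤ 4 ^ n := primorial_le_4_pow n

lemma log_le_two_sqrt {x : ℝ} (hx : 0 ≤ x) : Real.log x ≤ 2 * Real.sqrt x := by
  rcases eq_or_lt_of_le hx with h | h
  · simp [← h]
  · have hs : 0 < Real.sqrt x := Real.sqrt_pos.mpr h
    have h1 : Real.log x = 2 * Real.log (Real.sqrt x) := by
      rw [Real.log_sqrt hx]; ring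
    have h2 : Real.log (Real.sqrt x) ≤ Real.sqrt x - 1 := Real.log_le_sub_one_of_pos hs
    linarith

lemma log4_lt : Real.log 4 < 1.3863 := by
  have : (4:ℝ) = 2^2 := by norm_num
  rw [this, Real.log_pow]
  have := Real.log_two_lt_d9
  push_cast
  linarith

lemma log4_gt : (1.386:ℝ) < Real.log 4 := by
  have : (4:ℝ) = 2^2 := by norm_num
  rw [this, Real.log_pow]
  have := Real.log_two_gt_d9
  push_cast
  linarith

lemma cheb_upper : ∀ N : ℕ, 10000 ≤ N → (P N : ℝ) * Real.log N ≤ 4 * N := by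
  intro N hN
  have hN0 : (0:ℝ) < N := by positivity
  have hNR : (10000:ℝ) ≤ N := by exact_mod_cast hN
  set s := Nat.sqrt N with hs
  set m := (T N).card with hm
  have hlogN : (0:ℝ) < Real.log N := Real.log_pos (by norm_num; linarith)
  -- log version of T_pow_le
  have h1 : (m:ℝ) * Real.log (s+1) ≤ N * Real.log 4 := by
    have := T_pow_le N
    have hcast : ((s+1:ℕ):ℝ) ^ m ≤ (4:ℝ) ^ N := by exact_mod_cast this
    have hlog := Real.log_le_log (by positivity) hcast
    rw [Real.log_pow, Real.log_pow] at hlog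
    push_cast at hlog ⊢
    linarith
  -- log N ≤ 2 log (s+1)
  have h2 : Real.log N ≤ 2 * Real.log (s+1) := by
    have hlt : N < (s+1)^2 := by
      have := Nat.lt_succ_sqrt N
      nlinarith [Nat.lt_succ_sqrt N]
    have : (N:ℝ) ≤ ((s:ℝ)+1)^2 := by
      have : (N:ℝ) < (((s+1):ℕ):ℝ)^2 := by exact_mod_cast hlt
      push_cast at this
      linarith
    calc Real.log N ≤ Real.log (((s:ℝ)+1)^2) := Real.log_le_log hN0 this
    _ = 2 * Real.log (s+1) := by
        rw [Real.log_pow]; push_cast; ring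
  have hmlog : (m:ℝ) * Real.log N ≤ 2 * N * Real.log 4 := by
    have hm0 : (0:ℝ) ≤ m := Nat.cast_nonneg m
    nlinarith
  -- bound (s+1) * log N
  set S := Real.sqrt N with hS
  set R := Real.sqrt S with hR
  have hS2 : S^2 = N := Real.sq_sqrt hN0.le
  have hR2 : R^2 = S := Real.sq_sqrt (Real.sqrt_nonneg _)
  have hS100 : 100 ≤ S := by
    rw [hS, show (100:ℝ) = Real.sqrt (100^2) by rw [Real.sqrt_sq]; norm_num]
    apply Real.sqrt_le_sqrt
    norm_num; linarith
  have hR10 : 10 ≤ R := by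
    rw [hR, show (10:ℝ) = Real.sqrt (10^2) by rw [Real.sqrt_sq]; norm_num]
    apply Real.sqrt_le_sqrt
    nlinarith
  have hsS : (s:ℝ) ≤ S := by
    rw [hS]
    have : (s:ℝ)^2 ≤ N := by exact_mod_cast Nat.sqrt_le' N
    nlinarith [Real.sqrt_le_sqrt this, Real.sqrt_sq (by positivity : (0:ℝ) ≤ (s:ℝ))]
  have hlogN4R : Real.log N ≤ 4 * R := by
    have e1 : Real.log N = 2 * Real.log S := by rw [hS, Real.log_sqrt hN0.le]; ring
    have e2 : Real.log S ≤ 2 * R := log_le_two_sqrt (by positivity)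
    linarith
  have hsplit : (P N : ℝ) ≤ (s:ℝ) + 1 + m := by exact_mod_cast P_le_T N
  have hR0 : (0:ℝ) < R := by linarith
  have key : ((s:ℝ) + 1) * Real.log N ≤ 1.2 * N := by
    have h3 : ((s:ℝ)+1) * Real.log N ≤ (S+1) * (4*R) := by
      apply mul_le_mul (by linarith) hlogN4R (Real.log_nonneg (by linarith)) (by linarith)
    have h4 : (S+1) * (4*R) ≤ 1.2 * N := by nlinarith
    linarith
  have hlog4 := log4_lt
  calc (P N : ℝ) * Real.log N ≤ ((s:ℝ) + 1 + m) * Real.log N := by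
        apply mul_le_mul_of_nonneg_right hsplit hlogN.le
  _ = ((s:ℝ)+1) * Real.log N + m * Real.log N := by ring
  _ ≤ 1.2 * N + 2 * N * Real.log 4 := by linarith
  _ ≤ 4 * N := by nlinarith

lemma cheb_lower : ∀ N : ℕ, 10000 ≤ N → (1/4 : ℝ) * N ≤ (P N : ℝ) * Real.log N := by
  intro N hN
  have hN0 : (0:ℝ) < N := by positivity
  have hNR : (10000:ℝ) ≤ N := by exact_mod_cast hN
  set n := N / 2 with hn
  have hn4 : 4 ≤ n := by omega
  have h2n : 2 * n ≤ N := by omega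
  have hnN : (n:ℝ) ≥ (N-1)/2 := by
    have : 2 * n + 1 ≥ N := by omega
    have : (2 * n + 1 : ℝ) ≥ N := by exact_mod_cast this
    linarith
  have hn0 : (0:ℝ) < n := by positivity
  have hlogN : (0:ℝ) < Real.log N := Real.log_pos (by norm_num; linarith)
  -- log of cheb_lower_nat
  have h1 : (n:ℝ) * Real.log 4 ≤ Real.log n + (P (2*n) : ℝ) * Real.log (2*n) := by
    have hle : (4:ℕ) ^ n ≤ n * (2*n) ^ P (2*n) := (cheb_lower_nat n hn4).le
    have hcast : (4:ℝ) ^ n ≤ (n:ℝ) * ((2*n:ℕ):ℝ) ^ P (2*n) := by exact_mod_cast hle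
    have hlog := Real.log_le_log (by positivity) hcast
    rw [Real.log_pow, Real.log_mul (by positivity) (by positivity), Real.log_pow] at hlog
    push_cast at hlog ⊢
    linarith
  have hmona : (P (2*n) : ℝ) ≤ P N := by exact_mod_cast P_mono h2n
  have hlog2n : Real.log (2*n) ≤ Real.log N := by
    apply Real.log_le_log (by positivity)
    exact_mod_cast h2n
  have hlogn : Real.log n ≤ Real.log N := by
    apply Real.log_le_log hn0
    exact_mod_cast (by omega : n ≤ N)
  -- log N ≤ 2 sqrt N ≤ N/50
  have hlogN_small : Real.log N ≤ N / 50 := by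
    have h1 := log_le_two_sqrt hN0.le
    have hS : Real.sqrt N ≤ N / 100 := by
      rw [show (N:ℝ)/100 = Real.sqrt (((N:ℝ)/100)^2) by rw [Real.sqrt_sq (by positivity)]]
      apply Real.sqrt_le_sqrt
      nlinarith
    linarith
  have hP0 : (0:ℝ) ≤ P (2*n) := Nat.cast_nonneg _
  have hchain : (P N : ℝ) * Real.log N ≥ (n:ℝ) * Real.log 4 - Real.log N := by
    have s1 : (P (2*n) : ℝ) * Real.log (2*n) ≤ (P N : ℝ) * Real.log N := by
      apply mul_le_mul hmona hlog2n (Real.log_nonneg ?_) (Nat.cast_nonneg _)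
      have : (1:ℝ) ≤ (2*n:ℕ) := by exact_mod_cast (by omega : 1 ≤ 2*n)
      push_cast at this ⊢
      linarith
    nlinarith [hlogn]
  have hlog4 := log4_gt
  have : (n:ℝ) * Real.log 4 ≥ ((N:ℝ)-1)/2 * 1.386 := by nlinarith
  nlinarith

/-- Chebyshev's lower bound for `π(N)`, the Khinchin/`L²` upper bound for the `L¹`
Rademacher average over primes, and the resulting lower bound `σ ≥ 1/2` for any
Sidon-type exponent for primes. -/
theorem primes_rad_half :
    (∃ c₁ > (0:ℝ), ∀ᶠ N : ℕ in atTop,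
      c₁ * N / Real.log N ≤ ((Finset.range (N + 1)).filter Nat.Prime).card) ∧
    (∃ c₂ > (0:ℝ), ∀ᶠ N : ℕ in atTop,
      (∫ t in (0:ℝ)..1, |∑ p ∈ (Finset.range (N + 1)).filter Nat.Prime, rad p t|) ≤
        c₂ * Real.sqrt ((N : ℝ) / Real.log N)) ∧
    (∀ σ c : ℝ, 0 < σ → 0 < c →
      (∀ N : ℕ, (((Finset.range (N + 1)).filter Nat.Prime).card : ℝ) ≤
        c * (N : ℝ) ^ σ *
          ∫ t in (0:ℝ)..1, |∑ p ∈ (Finset.range (N + 1)).filter Nat.Prime, rad p t|) →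
      1 / 2 ≤ σ) := by
  have hlogpos : ∀ N : ℕ, 10000 ≤ N → (0:ℝ) < Real.log N := by
    intro N hN
    apply Real.log_pos
    have : (10000:ℝ) ≤ N := by exact_mod_cast hN
    linarith
  -- part 1
  have part1 : ∀ᶠ N : ℕ in atTop,
      (1/4:ℝ) * N / Real.log N ≤ ((Finset.range (N + 1)).filter Nat.Prime).card := by
    rw [eventually_atTop]
    refine ⟨10000, fun N hN => ?_⟩
    have h := cheb_lower N hN
    rw [div_le_iff₀ (hlogpos N hN)]
    exact h
  -- part 2
  have part2 : ∀ᶠ N : ℕ in atTop,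
      (∫ t in (0:ℝ)..1, |∑ p ∈ (Finset.range (N + 1)).filter Nat.Prime, rad p t|) ≤
        2 * Real.sqrt ((N : ℝ) / Real.log N) := by
    rw [eventually_atTop]
    refine ⟨10000, fun N hN => ?_⟩
    have hlog := hlogpos N hN
    have h1 := L1_le_sqrt_card ((Finset.range (N + 1)).filter Nat.Prime)
    have h2 : ((P N : ℝ)) ≤ 4 * ((N:ℝ) / Real.log N) := by
      have := cheb_upper N hN
      rw [← le_div_iff₀ hlog] at this
      rw [mul_div_assoc] at this
      exact this
    calc (∫ t in (0:ℝ)..1, |∑ p ∈ (Finset.range (N + 1)).filter Nat.Prime, rad p t|)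
        ≤ Real.sqrt (P N) := h1
    _ ≤ Real.sqrt (4 * ((N:ℝ) / Real.log N)) := Real.sqrt_le_sqrt h2
    _ = 2 * Real.sqrt ((N : ℝ) / Real.log N) := by
        rw [show (4:ℝ) * ((N:ℝ)/Real.log N) = 2^2 * ((N:ℝ)/Real.log N) by norm_num,
          Real.sqrt_mul (by positivity), Real.sqrt_sq (by norm_num)]
  refine ⟨⟨1/4, by norm_num, part1⟩, ⟨2, by norm_num, part2⟩, ?_⟩
  -- part 3
  intro σ c hσ hc hyp
  by_contra hcon
  push_neg at hcon
  set ε : ℝ := 1/2 - σ with hε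
  have hε0 : 0 < ε := by simp [hε]; linarith
  set A : ℝ := c * Real.sqrt 2 with hA
  have hA0 : 0 < A := by positivity
  -- eventually : N^ε ≤ 4*A*log N
  have ev1 : ∀ᶠ N : ℕ in atTop, (N:ℝ) ^ ε ≤ 4 * A * Real.log N := by
    rw [eventually_atTop]
    refine ⟨10000, fun N hN => ?_⟩
    have hlog := hlogpos N hN
    have hN0 : (0:ℝ) < N := by
      have : (10000:ℝ) ≤ N := by exact_mod_cast hN
      linarith
    have hint_le : (∫ t in (0:ℝ)..1,
        |∑ p ∈ (Finset.range (N + 1)).filter Nat.Prime, rad p t|)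
        ≤ Real.sqrt 2 * Real.sqrt N := by
      calc _ ≤ Real.sqrt (P N) := L1_le_sqrt_card _
      _ ≤ Real.sqrt (2 * N) := by
          apply Real.sqrt_le_sqrt
          have : P N ≤ N + 1 := by
            calc P N ≤ (Finset.range (N+1)).card := Finset.card_filter_le _ _
            _ = N + 1 := Finset.card_range _
          have h6 : (P N : ℝ) ≤ (N:ℝ) + 1 := by exact_mod_cast this
          have h7 : (10000:ℝ) ≤ N := by exact_mod_cast hN
          linarith
      _ = Real.sqrt 2 * Real.sqrt N := Real.sqrt_mul (by norm_num) _
    have hlower : (1/4:ℝ) * N / Real.log N ≤ P N := by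
      rw [div_le_iff₀ hlog]
      exact cheb_lower N hN
    have hupper : (P N : ℝ) ≤ c * (N:ℝ)^σ * (Real.sqrt 2 * Real.sqrt N) := by
      calc (P N : ℝ) ≤ c * (N : ℝ) ^ σ *
          ∫ t in (0:ℝ)..1, |∑ p ∈ (Finset.range (N + 1)).filter Nat.Prime, rad p t| := hyp N
      _ ≤ c * (N:ℝ)^σ * (Real.sqrt 2 * Real.sqrt N) := by
          apply mul_le_mul_of_nonneg_left hint_le
          positivity
    -- N ≤ 4*A* N^(σ+1/2) * log N
    have hrpow : (N:ℝ)^σ * Real.sqrt N = (N:ℝ)^(σ + 1/2) := by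
      rw [Real.sqrt_eq_rpow, ← Real.rpow_add hN0]
    have hkey : (N:ℝ) ≤ 4 * A * ((N:ℝ)^(σ+1/2) * Real.log N) := by
      have h5 : (1/4:ℝ) * N / Real.log N ≤ A * (N:ℝ)^(σ+1/2) := by
        calc (1/4:ℝ) * N / Real.log N ≤ P N := hlower
        _ ≤ c * (N:ℝ)^σ * (Real.sqrt 2 * Real.sqrt N) := hupper
        _ = A * ((N:ℝ)^σ * Real.sqrt N) := by rw [hA]; ring
        _ = A * (N:ℝ)^(σ+1/2) := by rw [hrpow]
      rw [div_le_iff₀ hlog] at h5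
      nlinarith [Real.rpow_pos_of_pos hN0 (σ+1/2), hlog]
    have hsplitN : (N:ℝ) = (N:ℝ)^ε * (N:ℝ)^(σ+1/2) := by
      rw [← Real.rpow_add hN0, show ε + (σ + 1/2) = 1 by rw [hε]; ring, Real.rpow_one]
    have hpow_pos : (0:ℝ) < (N:ℝ)^(σ+1/2) := Real.rpow_pos_of_pos hN0 _
    have hkey3 : (N:ℝ)^ε * (N:ℝ)^(σ+1/2) ≤ (4 * A * Real.log N) * (N:ℝ)^(σ+1/2) := by
      calc (N:ℝ)^ε * (N:ℝ)^(σ+1/2) = (N:ℝ) := hsplitN.symm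
      _ ≤ 4 * A * ((N:ℝ)^(σ+1/2) * Real.log N) := hkey
      _ = (4 * A * Real.log N) * (N:ℝ)^(σ+1/2) := by ring
    exact le_of_mul_le_mul_right hkey3 hpow_pos
  -- littleO : eventually log N ≤ (1/(8A)) N^ε
  have hlo := isLittleO_log_rpow_atTop hε0
  have ev2' : ∀ᶠ x : ℝ in atTop, ‖Real.log x‖ ≤ (1/(8*A)) * ‖x ^ ε‖ :=
    hlo.bound (by positivity)
  have ev2 : ∀ᶠ N : ℕ in atTop, Real.log N ≤ (1/(8*A)) * (N:ℝ)^ε := by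
    have evc := (tendsto_natCast_atTop_atTop (R := ℝ)).eventually ev2'
    filter_upwards [evc, eventually_atTop.mpr ⟨2, fun N (h : 2 ≤ N) => h⟩] with N hb hN2
    have hN0 : (0:ℝ) < N := by positivity
    have hlogN : (0:ℝ) ≤ Real.log N := Real.log_nonneg (by exact_mod_cast Nat.one_le_iff_ne_zero.mpr (by omega))
    rw [Real.norm_eq_abs, Real.norm_eq_abs, abs_of_nonneg hlogN,
      abs_of_nonneg (Real.rpow_pos_of_pos hN0 ε).le] at hb
    exact hb
  -- combine
  obtain ⟨N, h1, h2, hN2⟩ := (ev1.and (ev2.and (eventually_atTop.mpr ⟨2, fun N (h : 2 ≤ N) => h⟩))).exists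
  have hN0 : (0:ℝ) < N := by positivity
  have hpow : (0:ℝ) < (N:ℝ)^ε := Real.rpow_pos_of_pos hN0 ε
  have : (N:ℝ)^ε ≤ 4 * A * ((1/(8*A)) * (N:ℝ)^ε) := by
    calc (N:ℝ)^ε ≤ 4 * A * Real.log N := h1
    _ ≤ 4 * A * ((1/(8*A)) * (N:ℝ)^ε) := by
        apply mul_le_mul_of_nonneg_left h2 (by positivity)
  have : (N:ℝ)^ε ≤ (N:ℝ)^ε / 2 := by
    calc (N:ℝ)^ε ≤ 4 * A * ((1/(8*A)) * (N:ℝ)^ε) := this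
    _ = (N:ℝ)^ε / 2 := by field_simp; ring
  linarith
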